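/- (Theorem 3.2, case d=3; high-energy limit reconstruction of the Fourier transform of the leading multipoint potential.) Fix p ∈ ℝ³ and a vector-valued function γ with |γ(p)| = 1 and γ(p)·p = 0; for E > p²/4 set κ = √E, m_E(p) = (E − p²/4)^{1/2} γ(p), k_E(p) = p/2 + m_E(p) and l_E(p) = −p/2 + m_E(p) (so |k_E(p)| = |l_E(p)| = κ and k_E(p) − l_E(p) = p). Then √E · f(k_E(p), l_E(p)) → −(i/(2π²)) Σ_{j=1}^n e^{i p·y_j} as E → +∞; in particular, the scattering amplitude at high energies determines 𝓕v_{3,1}(p) = (2π)^{-3} Σ_j (−4πi) e^{i p·y_j} for every p ∈ ℝ³. -/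

import Mathlib

open Complex Finset Matrix

noncomputable section

/-- The matrix `A(κ)` for a three-dimensional multipoint potential:
`A(κ)_{jj} = α_j - iκ/(4π)`,
`A(κ)_{jj'} = -e^{iκ‖y_j - y_{j'}‖}/(4π‖y_j - y_{j'}‖)` for `j ≠ j'`. -/
def A3 (n : ℕ) (y : Fin n → EuclideanSpace ℝ (Fin 3)) (α : Fin n → ℂ) (κ : ℝ) :
    Matrix (Fin n) (Fin n) ℂ :=
  fun j j' =>
    if j = j' then α j - Complex.I * κ / (4 * Real.pi)
    else -Complex.exp (Complex.I * κ * ‖y j - y j'‖) / (4 * Real.pi * ‖y j - y j'‖)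

/-- `q(k) = A(κ)⁻¹ b(k)` with `b(k)_j = -e^{i k·y_j}`. -/
def q3 (n : ℕ) (y : Fin n → EuclideanSpace ℝ (Fin 3)) (α : Fin n → ℂ) (κ : ℝ)
    (k : EuclideanSpace ℝ (Fin 3)) : Fin n → ℂ :=
  (A3 n y α κ)⁻¹ *ᵥ fun j => -Complex.exp (Complex.I * (inner ℝ k (y j) : ℝ))

/-- The scattering amplitude `f(k,ℓ) = (2π)⁻³ Σ_j q_j(k) e^{-iℓ·y_j}`. -/
def f3 (n : ℕ) (y : Fin n → EuclideanSpace ℝ (Fin 3)) (α : Fin n → ℂ) (κ : ℝ)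
    (k ℓ : EuclideanSpace ℝ (Fin 3)) : ℂ :=
  ((2 * Real.pi : ℂ) ^ 3)⁻¹ *
    ∑ j, q3 n y α κ k j * Complex.exp (-Complex.I * (inner ℝ ℓ (y j) : ℝ))

/-- The matrix `W(κ)`: `W(κ)_{jj} = α_j`,
`W(κ)_{jj'} = -e^{iκ‖y_j - y_{j'}‖}/(4π‖y_j - y_{j'}‖)` for `j ≠ j'`. -/
def W3 (n : ℕ) (y : Fin n → EuclideanSpace ℝ (Fin 3)) (α : Fin n → ℂ) (κ : ℝ) :
    Matrix (Fin n) (Fin n) ℂ :=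
  fun j j' =>
    if j = j' then α j
    else -Complex.exp (Complex.I * κ * ‖y j - y j'‖) / (4 * Real.pi * ‖y j - y j'‖)

/-- The coefficients `C_m(k,ℓ) = Σ_{j,j'} [W(κ)^m]_{jj'} e^{i(k·y_{j'} - ℓ·y_j)}`. -/
def C3coef (n : ℕ) (y : Fin n → EuclideanSpace ℝ (Fin 3)) (α : Fin n → ℂ) (κ : ℝ)
    (m : ℕ) (k ℓ : EuclideanSpace ℝ (Fin 3)) : ℂ :=
  ∑ j, ∑ j', (W3 n y α κ ^ m) j j' *
    Complex.exp (Complex.I * ((inner ℝ k (y j') : ℝ) - (inner ℝ ℓ (y j) : ℝ)))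

/-- The rescaled matrix `M(E) = 1 - (4πi/√E) W(√E)` (note `-(4πi)/√E` as written). -/
def Mmat (n : ℕ) (y : Fin n → EuclideanSpace ℝ (Fin 3)) (α : Fin n → ℂ) (E : ℝ) :
    Matrix (Fin n) (Fin n) ℂ :=
  1 - (-(4 * (Real.pi : ℂ) * Complex.I) / (Real.sqrt E : ℂ)) • W3 n y α (Real.sqrt E)

lemma hce (κ : ℝ) (hκ : (κ:ℂ) ≠ 0) :
    (-(Complex.I * κ) / (4 * Real.pi)) * (-(4 * (Real.pi : ℂ) * Complex.I) / κ) = -1 := by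
  have hπ : (Real.pi : ℂ) ≠ 0 := Complex.ofReal_ne_zero.2 Real.pi_ne_zero
  field_simp
  ring_nf
  simp [Complex.I_sq]

lemma A3_eq (n : ℕ) (y : Fin n → EuclideanSpace ℝ (Fin 3)) (α : Fin n → ℂ) (κ : ℝ)
    (hκ : κ ≠ 0) :
    A3 n y α κ = (-(Complex.I * κ) / (4 * Real.pi)) •
      (1 - (-(4 * (Real.pi : ℂ) * Complex.I) / κ) • W3 n y α κ) := by
  have hπ : (Real.pi : ℂ) ≠ 0 := Complex.ofReal_ne_zero.2 Real.pi_ne_zero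
  have hκ' : (κ : ℂ) ≠ 0 := Complex.ofReal_ne_zero.2 hκ
  have H := hce κ hκ'
  ext j j'
  by_cases h : j = j'
  · simp only [A3, W3, h, if_pos, Matrix.smul_apply, Matrix.sub_apply,
      Matrix.one_apply_eq, smul_eq_mul]
    field_simp
    ring_nf
    simp [Complex.I_sq]
  · simp only [A3, W3, if_neg h, Matrix.smul_apply, Matrix.sub_apply,
      Matrix.one_apply_ne (h : j ≠ j'), smul_eq_mul]
    set w : ℂ := -Complex.exp (Complex.I * κ * ‖y j - y j'‖) / (4 * Real.pi * ‖y j - y j'‖)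
    calc w = -(-1 * w) := by ring
    _ = -((-(Complex.I * κ) / (4 * Real.pi)) * ((-(4 * (Real.pi : ℂ) * Complex.I) / κ)) * w) := by
        rw [H]
    _ = -(Complex.I * ↑κ) / (4 * ↑Real.pi) * (0 - -(4 * ↑Real.pi * Complex.I) / ↑κ * w) := by ring

lemma key (n : ℕ) (y : Fin n → EuclideanSpace ℝ (Fin 3)) (α : Fin n → ℂ) (E : ℝ)
    (hE : 0 < E) (hdet : IsUnit (Mmat n y α E).det) (k l : EuclideanSpace ℝ (Fin 3)) :
    (Real.sqrt E : ℂ) * f3 n y α (Real.sqrt E) k l =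
      ((2 * Real.pi : ℂ) ^ 3)⁻¹ * (4 * Real.pi * Complex.I) *
        ∑ j, ∑ j', (Mmat n y α E)⁻¹ j j' *
          (-(Complex.exp (Complex.I * ((inner ℝ k (y j') : ℝ) : ℂ))) *
            Complex.exp (-Complex.I * ((inner ℝ l (y j) : ℝ) : ℂ))) := by
  have hκpos : 0 < Real.sqrt E := Real.sqrt_pos.2 hE
  have hκ : Real.sqrt E ≠ 0 := hκpos.ne'
  have hκ' : ((Real.sqrt E : ℝ) : ℂ) ≠ 0 := Complex.ofReal_ne_zero.2 hκ
  have hπ : (Real.pi : ℂ) ≠ 0 := Complex.ofReal_ne_zero.2 Real.pi_ne_zero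
  set κ : ℝ := Real.sqrt E with hκdef
  set c : ℂ := -(Complex.I * κ) / (4 * Real.pi) with hcdef
  have hc : c ≠ 0 := by
    rw [hcdef]
    rw [div_ne_zero_iff]
    constructor
    · simp [Complex.I_ne_zero, hκ']
    · simp [hπ]
  have hMdef : Mmat n y α E = 1 - (-(4 * (Real.pi : ℂ) * Complex.I) / κ) • W3 n y α κ := rfl
  have hinv : (A3 n y α κ)⁻¹ = c⁻¹ • (Mmat n y α E)⁻¹ := by
    rw [A3_eq n y α κ hκ, ← hMdef, ← hcdef]
    have h2 := Matrix.inv_smul' (A := Mmat n y α E) (Units.mk0 c hc) hdet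
    simpa [Units.smul_def] using h2
  have hc4 : (κ : ℂ) * c⁻¹ = 4 * Real.pi * Complex.I := by
    rw [hcdef]
    field_simp
    ring_nf
    simp [Complex.I_sq]
  simp only [f3, q3, hinv, Matrix.smul_apply, Pi.smul_apply, smul_eq_mul,
    Matrix.mulVec, dotProduct]
  simp only [Finset.mul_sum, Finset.sum_mul]
  refine Finset.sum_congr rfl fun j _ => ?_
  refine Finset.sum_congr rfl fun j' _ => ?_
  linear_combination (((2 * Real.pi : ℂ) ^ 3)⁻¹ * ((Mmat n y α E)⁻¹ j j') *
    (-Complex.exp (Complex.I * ((inner ℝ k (y j') : ℝ) : ℂ))) *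
    Complex.exp (-Complex.I * ((inner ℝ l (y j) : ℝ) : ℂ))) * hc4

lemma norm_W3_le (n : ℕ) (y : Fin n → EuclideanSpace ℝ (Fin 3)) (α : Fin n → ℂ)
    (κ : ℝ) (j j' : Fin n) :
    ‖W3 n y α κ j j'‖ ≤ ‖α j‖ + (4 * Real.pi * ‖y j - y j'‖)⁻¹ := by
  by_cases h : j = j'
  · simp only [W3, if_pos h]
    exact le_add_of_nonneg_right (by positivity)
  · simp only [W3, if_neg h]
    rw [norm_div, norm_neg]
    have h1 : ‖Complex.exp (Complex.I * κ * ‖y j - y j'‖)‖ = 1 := by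
      have h2 : (Complex.I * κ * (‖y j - y j'‖ : ℝ) : ℂ) =
          ((κ * ‖y j - y j'‖ : ℝ) : ℂ) * Complex.I := by push_cast; ring
      rw [h2, Complex.norm_exp_ofReal_mul_I]
    have h2 : ‖(4 * (Real.pi : ℂ) * (‖y j - y j'‖ : ℝ))‖ = 4 * Real.pi * ‖y j - y j'‖ := by
      have h3 : (4 * (Real.pi : ℂ) * (‖y j - y j'‖ : ℝ)) =
          ((4 * Real.pi * ‖y j - y j'‖ : ℝ) : ℂ) := by push_cast; ring
      rw [h3, Complex.norm_real, Real.norm_eq_abs, _root_.abs_of_nonneg (by positivity)]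
    rw [h1, h2, one_div]
    exact le_add_of_nonneg_left (norm_nonneg _)

lemma tendsto_sqrt_atTop' : Filter.Tendsto Real.sqrt Filter.atTop Filter.atTop := by
  apply Filter.tendsto_atTop_atTop_of_monotone
  · intro a b hab; exact Real.sqrt_le_sqrt hab
  · intro b; exact ⟨b ^ 2, by rw [Real.sqrt_sq_eq_abs]; exact le_abs_self b⟩

lemma tendsto_Mmat (n : ℕ) (y : Fin n → EuclideanSpace ℝ (Fin 3)) (α : Fin n → ℂ) :
    Filter.Tendsto (fun E => Mmat n y α E) Filter.atTop (nhds 1) := by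
  refine tendsto_pi_nhds.2 ?_
  intro j
  rw [tendsto_pi_nhds]
  intro j'
  simp only [Mmat, Matrix.sub_apply, Matrix.smul_apply, smul_eq_mul]
  have h0 : Filter.Tendsto
      (fun E : ℝ => (-(4 * (Real.pi : ℂ) * Complex.I) / (Real.sqrt E : ℂ)) *
        W3 n y α (Real.sqrt E) j j') Filter.atTop (nhds 0) := by
    have hB : (0:ℝ) ≤ ‖α j‖ + (4 * Real.pi * ‖y j - y j'‖)⁻¹ := by positivity
    apply squeeze_zero_norm'
      (a := fun E : ℝ => (4 * Real.pi * (‖α j‖ + (4 * Real.pi * ‖y j - y j'‖)⁻¹)) *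
        (Real.sqrt E)⁻¹)
    · filter_upwards [Filter.eventually_ge_atTop (1:ℝ)] with E hE
      have hsE : 0 < Real.sqrt E := Real.sqrt_pos.2 (by linarith)
      rw [norm_mul, norm_div, norm_neg]
      have hn1 : ‖(4 * (Real.pi : ℂ) * Complex.I)‖ = 4 * Real.pi := by
        have h4 : (4 * (Real.pi : ℂ) * Complex.I) = ((4 * Real.pi : ℝ) : ℂ) * Complex.I := by
          push_cast; ring
        rw [h4, norm_mul, Complex.norm_real, Complex.norm_I, mul_one, Real.norm_eq_abs,
          _root_.abs_of_nonneg (by positivity)]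
      have hn2 : ‖((Real.sqrt E : ℝ) : ℂ)‖ = Real.sqrt E := by
        rw [Complex.norm_real, Real.norm_eq_abs, _root_.abs_of_nonneg hsE.le]
      rw [hn1, hn2]
      have hW := norm_W3_le n y α (Real.sqrt E) j j'
      calc 4 * Real.pi / Real.sqrt E * ‖W3 n y α (Real.sqrt E) j j'‖
          ≤ 4 * Real.pi / Real.sqrt E * (‖α j‖ + (4 * Real.pi * ‖y j - y j'‖)⁻¹) := by
            apply mul_le_mul_of_nonneg_left hW (by positivity)
        _ = 4 * Real.pi * (‖α j‖ + (4 * Real.pi * ‖y j - y j'‖)⁻¹) * (Real.sqrt E)⁻¹ := by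
            ring
    · have := (tendsto_sqrt_atTop'.inv_tendsto_atTop).const_mul
        (4 * Real.pi * (‖α j‖ + (4 * Real.pi * ‖y j - y j'‖)⁻¹))
      simpa using this
  have h1 := (tendsto_const_nhds (x := (1 : Matrix (Fin n) (Fin n) ℂ) j j')
    (f := Filter.atTop (α := ℝ))).sub h0
  simpa using h1


/-- Theorem 3.2, case d = 3: high-energy limit reconstruction of the Fourier transform
of the leading multipoint potential. -/
theorem stmt19 (n : ℕ) (y : Fin n → EuclideanSpace ℝ (Fin 3)) (α : Fin n → ℂ)
    (hy : Function.Injective y)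
    (p γ : EuclideanSpace ℝ (Fin 3)) (hγ : ‖γ‖ = 1) (hγp : (inner ℝ γ p : ℝ) = 0) :
    Filter.Tendsto
      (fun E : ℝ =>
        (Real.sqrt E : ℂ) * f3 n y α (Real.sqrt E)
          ((1 / 2 : ℝ) • p + Real.sqrt (E - ‖p‖ ^ 2 / 4) • γ)
          ((-(1 / 2) : ℝ) • p + Real.sqrt (E - ‖p‖ ^ 2 / 4) • γ))
      Filter.atTop
      (nhds (-(Complex.I / (2 * (Real.pi : ℂ) ^ 2)) *
        ∑ j, Complex.exp (Complex.I * (inner ℝ p (y j) : ℝ)))) := by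
  classical
  have hπ : (Real.pi : ℂ) ≠ 0 := Complex.ofReal_ne_zero.2 Real.pi_ne_zero
  have hM := tendsto_Mmat n y α
  -- eventual invertibility
  have hdetT : Filter.Tendsto (fun E => (Mmat n y α E).det) Filter.atTop (nhds 1) := by
    have hcont : Continuous fun A : Matrix (Fin n) (Fin n) ℂ => A.det :=
      continuous_id.matrix_det
    have h1 := hcont.continuousAt.tendsto.comp hM
    simpa [Function.comp_def] using h1
  have hdet : ∀ᶠ E in Filter.atTop, IsUnit (Mmat n y α E).det := by
    filter_upwards [hdetT.eventually_ne one_ne_zero] with E h using isUnit_iff_ne_zero.2 h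
  -- entrywise limit of the inverse
  have hMinv : ∀ j j' : Fin n, Filter.Tendsto (fun E => (Mmat n y α E)⁻¹ j j')
      Filter.atTop (nhds (if j = j' then 1 else 0)) := by
    intro j j'
    have hcont : ContinuousAt (fun A : Matrix (Fin n) (Fin n) ℂ => A⁻¹ j j') 1 := by
      have heq : (fun A : Matrix (Fin n) (Fin n) ℂ => A⁻¹ j j') =
          fun A => (A.det)⁻¹ * A.adjugate j j' := by
        funext A
        rw [Matrix.inv_def, Ring.inverse_eq_inv]
        simp [Matrix.smul_apply, smul_eq_mul]
      rw [heq]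
      exact ((continuousAt_inv₀ (by simp)).comp
        continuous_id.matrix_det.continuousAt).mul
        ((continuous_id.matrix_adjugate.matrix_elem j j').continuousAt)
    have h1 := hcont.tendsto.comp hM
    simpa [Matrix.one_apply, Function.comp_def] using h1
  -- limit of the double sum
  have hSum : Filter.Tendsto
      (fun E : ℝ => ∑ j, ∑ j', (Mmat n y α E)⁻¹ j j' *
        (-(Complex.exp (Complex.I *
            ((inner ℝ ((1 / 2 : ℝ) • p + Real.sqrt (E - ‖p‖ ^ 2 / 4) • γ) (y j') : ℝ) : ℂ))) *
          Complex.exp (-Complex.I *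
            ((inner ℝ ((-(1 / 2) : ℝ) • p + Real.sqrt (E - ‖p‖ ^ 2 / 4) • γ) (y j) : ℝ) : ℂ))))
      Filter.atTop
      (nhds (∑ j, -(Complex.exp (Complex.I * ((inner ℝ p (y j) : ℝ) : ℂ))))) := by
    apply tendsto_finset_sum
    intro j _
    have hterm : ∀ j' : Fin n, Filter.Tendsto
        (fun E : ℝ => (Mmat n y α E)⁻¹ j j' *
          (-(Complex.exp (Complex.I *
              ((inner ℝ ((1 / 2 : ℝ) • p + Real.sqrt (E - ‖p‖ ^ 2 / 4) • γ) (y j') : ℝ) : ℂ))) *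
            Complex.exp (-Complex.I *
              ((inner ℝ ((-(1 / 2) : ℝ) • p + Real.sqrt (E - ‖p‖ ^ 2 / 4) • γ) (y j) : ℝ) : ℂ))))
        Filter.atTop
        (nhds (if j' = j then -(Complex.exp (Complex.I * ((inner ℝ p (y j) : ℝ) : ℂ))) else 0)) := by
      intro j'
      by_cases h : j' = j
      · subst h
        have hu : ∀ E : ℝ,
            -(Complex.exp (Complex.I *
              ((inner ℝ ((1 / 2 : ℝ) • p + Real.sqrt (E - ‖p‖ ^ 2 / 4) • γ) (y j') : ℝ) : ℂ))) *
            Complex.exp (-Complex.I *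
              ((inner ℝ ((-(1 / 2) : ℝ) • p + Real.sqrt (E - ‖p‖ ^ 2 / 4) • γ) (y j') : ℝ) : ℂ)) =
            -(Complex.exp (Complex.I * ((inner ℝ p (y j') : ℝ) : ℂ))) := by
          intro E
          have hkl : ((1 / 2 : ℝ) • p + Real.sqrt (E - ‖p‖ ^ 2 / 4) • γ) -
              ((-(1 / 2) : ℝ) • p + Real.sqrt (E - ‖p‖ ^ 2 / 4) • γ) = p := by
            rw [add_sub_add_right_eq_sub, ← sub_smul]
            norm_num
          have hinner : (inner ℝ ((1 / 2 : ℝ) • p + Real.sqrt (E - ‖p‖ ^ 2 / 4) • γ) (y j') : ℝ) -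
              (inner ℝ ((-(1 / 2) : ℝ) • p + Real.sqrt (E - ‖p‖ ^ 2 / 4) • γ) (y j') : ℝ) =
              (inner ℝ p (y j') : ℝ) := by
            rw [← inner_sub_left, hkl]
          have harg : Complex.I *
              ((inner ℝ ((1 / 2 : ℝ) • p + Real.sqrt (E - ‖p‖ ^ 2 / 4) • γ) (y j') : ℝ) : ℂ) +
              -Complex.I *
              ((inner ℝ ((-(1 / 2) : ℝ) • p + Real.sqrt (E - ‖p‖ ^ 2 / 4) • γ) (y j') : ℝ) : ℂ) =
              Complex.I * ((((inner ℝ ((1 / 2 : ℝ) • p + Real.sqrt (E - ‖p‖ ^ 2 / 4) • γ) (y j') : ℝ) -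
                (inner ℝ ((-(1 / 2) : ℝ) • p + Real.sqrt (E - ‖p‖ ^ 2 / 4) • γ) (y j') : ℝ) : ℝ)) : ℂ) := by
            push_cast; ring
          rw [neg_mul, ← Complex.exp_add, harg, hinner]
        simp only [hu]
        have h1 := (hMinv j' j').mul_const
          (-(Complex.exp (Complex.I * ((inner ℝ p (y j') : ℝ) : ℂ))))
        simpa using h1
      · rw [if_neg h]
        have hne : ¬ j = j' := fun hh => h hh.symm
        apply squeeze_zero_norm (a := fun E : ℝ => ‖(Mmat n y α E)⁻¹ j j'‖)
        · intro E
          rw [norm_mul, norm_mul, norm_neg]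
          have e1 : ‖Complex.exp (Complex.I *
              ((inner ℝ ((1 / 2 : ℝ) • p + Real.sqrt (E - ‖p‖ ^ 2 / 4) • γ) (y j') : ℝ) : ℂ))‖ = 1 := by
            have : Complex.I *
                ((inner ℝ ((1 / 2 : ℝ) • p + Real.sqrt (E - ‖p‖ ^ 2 / 4) • γ) (y j') : ℝ) : ℂ) =
                (((inner ℝ ((1 / 2 : ℝ) • p + Real.sqrt (E - ‖p‖ ^ 2 / 4) • γ) (y j') : ℝ)) : ℂ) *
                  Complex.I := by ring
            rw [this, Complex.norm_exp_ofReal_mul_I]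
          have e2 : ‖Complex.exp (-Complex.I *
              ((inner ℝ ((-(1 / 2) : ℝ) • p + Real.sqrt (E - ‖p‖ ^ 2 / 4) • γ) (y j) : ℝ) : ℂ))‖ = 1 := by
            have : -Complex.I *
                ((inner ℝ ((-(1 / 2) : ℝ) • p + Real.sqrt (E - ‖p‖ ^ 2 / 4) • γ) (y j) : ℝ) : ℂ) =
                (((-(inner ℝ ((-(1 / 2) : ℝ) • p + Real.sqrt (E - ‖p‖ ^ 2 / 4) • γ) (y j) : ℝ)) : ℝ) : ℂ) *
                  Complex.I := by push_cast; ring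
            rw [this, Complex.norm_exp_ofReal_mul_I]
          rw [e1, e2]
          simp
        · have h1 := (hMinv j j').norm
          rw [if_neg hne] at h1
          simpa using h1
    have h2 := tendsto_finset_sum (Finset.univ : Finset (Fin n)) (fun j' _ => hterm j')
    have h3 : ∑ j' : Fin n, (if j' = j then
        -(Complex.exp (Complex.I * ((inner ℝ p (y j) : ℝ) : ℂ))) else 0) =
        -(Complex.exp (Complex.I * ((inner ℝ p (y j) : ℝ) : ℂ))) := by
      rw [Finset.sum_ite_eq' Finset.univ j
        (fun _ => -(Complex.exp (Complex.I * ((inner ℝ p (y j) : ℝ) : ℂ))))]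
      simp
    rw [← h3]
    exact h2
  -- put everything together
  have h1 := hSum.const_mul (((2 * Real.pi : ℂ) ^ 3)⁻¹ * (4 * Real.pi * Complex.I))
  have hC : ((2 * Real.pi : ℂ) ^ 3)⁻¹ * (4 * Real.pi * Complex.I) *
      (∑ j, -(Complex.exp (Complex.I * ((inner ℝ p (y j) : ℝ) : ℂ)))) =
      -(Complex.I / (2 * (Real.pi : ℂ) ^ 2)) *
        ∑ j, Complex.exp (Complex.I * ((inner ℝ p (y j) : ℝ) : ℂ)) := by
    rw [Finset.sum_neg_distrib]
    field_simp
    ring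
  rw [hC] at h1
  apply h1.congr'
  filter_upwards [hdet, Filter.eventually_gt_atTop (0 : ℝ)] with E hdE hE0
  exact (key n y α E hE0 hdE _ _).symm
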